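/- (Compactness claim) Under the hypothesis that there exist a finite subgraph G_K and C > 0 with C‖σ‖_W ≤ ‖Dσ‖_{ℓ²(G)} for all σ finitely supported outside G_K: if (σₙ) is a sequence of finitely supported pairs that is bounded in W and (Dσₙ) converges in ℓ²(G), then (σₙ) has a subsequence converging in W. -/

import Mathlib

open scoped BigOperators
open Function Filter

structure WGraph (V : Type*) where
  E : Set (V × V)
  symm : ∀ e ∈ E, (e.2, e.1) ∈ E
  noloop : ∀ v : V, (v, v) ∉ E
  c : V → ℝ
  r : V × V → ℝ
  cpos : ∀ v, 0 < c v
  rpos : ∀ e, 0 < r e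
  rsymm : ∀ e : V × V, r (e.2, e.1) = r e
  locfin : ∀ v : V, {e : V × V | e ∈ E ∧ e.1 = v}.Finite

variable {V : Type*}

/-- The difference operator `(df)(e) = f(e⁺) - f(e⁻)`. -/
def dOp (f : V → ℝ) : V × V → ℝ := fun e => f e.2 - f e.1

/-- The coboundary operator `(δφ)(x) = (1/c x) Σ_{e ∈ E, e⁺ = x} r e * φ e`. -/
noncomputable def deltaOp (G : WGraph V) (φ : V × V → ℝ) : V → ℝ :=
  fun x => (G.c x)⁻¹ * ∑ᶠ e ∈ {e : V × V | e ∈ G.E ∧ e.2 = x}, G.r e * φ e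

/-- Skewsymmetric function on oriented edges. -/
def Skew (φ : V × V → ℝ) : Prop := ∀ e : V × V, φ (e.2, e.1) = -φ e

/-- Finitely supported function. -/
def FinSupp {α β : Type*} [Zero β] (f : α → β) : Prop := (Function.support f).Finite

/-- Connectedness of a graph: any two vertices joined by a path of edges. -/
def WGraph.Connected (G : WGraph V) : Prop :=
  ∀ x y : V, ∃ n : ℕ, ∃ p : ℕ → V, p 0 = x ∧ p n = y ∧ ∀ i < n, (p i, p (i + 1)) ∈ G.E

/-- Inner product on vertex functions: `Σ_x c x * f x * g x`. -/
noncomputable def innerV (G : WGraph V) (f g : V → ℝ) : ℝ := ∑ᶠ x : V, G.c x * (f x * g x)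

/-- Inner product on edge functions: `(1/2) Σ_{e ∈ E} r e * φ e * ψ e`. -/
noncomputable def innerE (G : WGraph V) (φ ψ : V × V → ℝ) : ℝ :=
  (1 / 2) * ∑ᶠ e ∈ G.E, G.r e * (φ e * ψ e)

/-- Squared ℓ² norm of the pair `(f, φ)` restricted to vertices in `S` and edges in `T`. -/
noncomputable def sqnormOn (G : WGraph V) (S : Set V) (T : Set (V × V)) (f : V → ℝ)
    (φ : V × V → ℝ) : ℝ :=
  (∑ᶠ x ∈ S, G.c x * f x ^ 2) + (1 / 2) * ∑ᶠ e ∈ T, G.r e * φ e ^ 2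

/-- Edges of the subgraph induced by `K`. -/
def EK (G : WGraph V) (K : Set V) : Set (V × V) := {e ∈ G.E | e.1 ∈ K ∧ e.2 ∈ K}

/-- Edge boundary of `K`: edges with exactly one endpoint in `K`. -/
def edgeBdry (G : WGraph V) (K : Set V) : Set (V × V) :=
  {e ∈ G.E | (e.1 ∈ K ∧ e.2 ∉ K) ∨ (e.1 ∉ K ∧ e.2 ∈ K)}

/-- `D = d + δ` is non-parabolic at infinity with respect to the finite subgraph on `K`. -/
noncomputable def NonParabolicAt (G : WGraph V) (K : Set V) : Prop :=
  ∀ VU : Set V, ∀ EU : Set (V × V), VU.Finite → EU.Finite →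
    VU ⊆ Kᶜ → EU ⊆ G.E \ EK G K →
    ∃ C > 0, ∀ f : V → ℝ, ∀ φ : V × V → ℝ,
      FinSupp f → FinSupp φ → Skew φ →
      Function.support f ⊆ Kᶜ → Function.support φ ⊆ G.E \ EK G K →
      C * Real.sqrt (sqnormOn G VU EU f φ) ≤
        Real.sqrt (sqnormOn G Kᶜ (G.E \ EK G K) (deltaOp G φ) (dOp f))

/-- `(Kt, Et)` is a (finite-subgraph) neighborhood of the subgraph on `K`. -/
def IsNbhd (G : WGraph V) (K Kt : Set V) (Et : Set (V × V)) : Prop :=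
  Kt.Finite ∧ Et.Finite ∧ K ⊆ Kt ∧ EK G K ∪ edgeBdry G K ⊆ Et ∧ Et ⊆ G.E ∧
    ∀ e ∈ Et, e.1 ∈ Kt ∧ e.2 ∈ Kt

/-- Existence of a cycle in the graph. -/
def HasCycle (G : WGraph V) : Prop :=
  ∃ n : ℕ, 3 ≤ n ∧ ∃ p : ℕ → V, p n = p 0 ∧
    (∀ i j : ℕ, i < n → j < n → p i = p j → i = j) ∧ ∀ i < n, (p i, p (i + 1)) ∈ G.E

/-- The outward edges of generation `m` in the two binary subtrees (`Ev` and `Bv` sides)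
emanating from the vertex `x₀` of the triadic tree. -/
def genEdges (x₀ : V) (Ev Bv : ℕ → ℕ → V) : ℕ → Set (V × V)
  | 0 => {(x₀, Ev 0 0), (x₀, Bv 0 0)}
  | m + 1 => {p | ∃ k, k < 2 ^ (m + 1) ∧
      (p = (Ev m (k / 2), Ev (m + 1) k) ∨ p = (Bv m (k / 2), Bv (m + 1) k))}

/-- A set of oriented edges together with all reversed edges. -/
def symEdges (S : Set (V × V)) : Set (V × V) := {p | p ∈ S ∨ (p.2, p.1) ∈ S}

/-- compactness claim. -/
theorem stmt12 (G : WGraph V) [Infinite V] (hconn : G.Connected)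
    {W H : Type*} [NormedAddCommGroup W] [InnerProductSpace ℝ W] [CompleteSpace W]
    [NormedAddCommGroup H] [InnerProductSpace ℝ H] [CompleteSpace H]
    (j : ((V → ℝ) × (V × V → ℝ)) →ₗ[ℝ] W)
    (emb : ((V → ℝ) × (V × V → ℝ)) →ₗ[ℝ] H)
    (D : W →L[ℝ] H)
    (S : Set ((V → ℝ) × (V × V → ℝ)))
    (hS : S = {p | FinSupp p.1 ∧ FinSupp p.2 ∧ Skew p.2 ∧ Function.support p.2 ⊆ G.E})
    (hdense : Dense (j '' S))
    (ι : W →L[ℝ] ((V → ℝ) × (V × V → ℝ)))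
    (hι : ∀ p ∈ S, ι (j p) = p)
    (hemb : ∀ p ∈ S, ‖emb p‖ = Real.sqrt (sqnormOn G Set.univ G.E p.1 p.2))
    (hD : ∀ p ∈ S, D (j p) = emb (deltaOp G p.2, dOp p.1))
    (K : Set V) (hK : K.Finite) (C : ℝ) (hC : 0 < C)
    (hineq : ∀ f : V → ℝ, ∀ φ : V × V → ℝ,
      FinSupp f → FinSupp φ → Skew φ → Function.support φ ⊆ G.E →
      Function.support f ⊆ Kᶜ → Function.support φ ⊆ (EK G K)ᶜ →
      C * ‖j (f, φ)‖ ≤ ‖D (j (f, φ))‖) :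
    ∀ σ : ℕ → ((V → ℝ) × (V × V → ℝ)), (∀ n, σ n ∈ S) →
      (∃ M : ℝ, ∀ n, ‖j (σ n)‖ ≤ M) →
      (∃ y : H, Filter.Tendsto (fun n => D (j (σ n))) Filter.atTop (nhds y)) →
      ∃ ψ : ℕ → ℕ, StrictMono ψ ∧
        ∃ w : W, Filter.Tendsto (fun n => j (σ (ψ n))) Filter.atTop (nhds w) := by

  classical
  intro σ hσS hbd hDconv
  obtain ⟨M, hM⟩ := hbd
  obtain ⟨y, hy⟩ := hDconv
  have hσ : ∀ n, FinSupp (σ n).1 ∧ FinSupp (σ n).2 ∧ Skew (σ n).2 ∧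
      Function.support (σ n).2 ⊆ G.E := by
    intro n; have h := hσS n; rw [hS] at h; exact h
  -- finiteness of EK G K
  have hEKfin : (EK G K).Finite := by
    have hsub : EK G K ⊆ ⋃ v ∈ K, {e : V × V | e ∈ G.E ∧ e.1 = v} := by
      intro e he; exact Set.mem_biUnion he.2.1 ⟨he.1, rfl⟩
    exact ((hK.biUnion (fun v _ => G.locfin v)).subset hsub)
  have hEKsymm : ∀ e : V × V, (e.2, e.1) ∈ EK G K ↔ e ∈ EK G K := by
    intro e
    constructor
    · rintro ⟨h1, h2, h3⟩
      exact ⟨G.symm _ h1, h3, h2⟩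
    · rintro ⟨h1, h2, h3⟩
      exact ⟨G.symm _ h1, h3, h2⟩
  set K' : Finset V := hK.toFinset with hK'def
  set E' : Finset (V × V) := hEKfin.toFinset with hE'def
  -- inner and outer parts
  set a : ℕ → ((V → ℝ) × (V × V → ℝ)) := fun n =>
    (fun x => if x ∈ K then (σ n).1 x else 0,
     fun e => if e ∈ EK G K then (σ n).2 e else 0) with hadef
  set b : ℕ → ((V → ℝ) × (V × V → ℝ)) := fun n => σ n - a n with hbdef
  have hab : ∀ n, σ n = a n + b n := by
    intro n; rw [hbdef]; simp
  have hb1 : ∀ n x, (b n).1 x = if x ∈ K then 0 else (σ n).1 x := by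
    intro n x
    by_cases hx : x ∈ K <;> simp [hbdef, hadef, hx]
  have hb2 : ∀ n e, (b n).2 e = if e ∈ EK G K then 0 else (σ n).2 e := by
    intro n e
    by_cases he : e ∈ EK G K <;> simp [hbdef, hadef, he]
  -- the key inequality for outer parts
  have key : ∀ n m, C * ‖j (b n) - j (b m)‖ ≤ ‖D (j (b n)) - D (j (b m))‖ := by
    intro n m
    set p : ((V → ℝ) × (V × V → ℝ)) := b n - b m with hpdef
    have hp1 : ∀ x, p.1 x = (b n).1 x - (b m).1 x := fun x => rfl
    have hp2 : ∀ e, p.2 e = (b n).2 e - (b m).2 e := fun e => rfl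
    have hfs1 : FinSupp p.1 := by
      apply Set.Finite.subset ((hσ n).1.union (hσ m).1)
      intro x hx
      rw [Function.mem_support] at hx
      rw [hp1 x, hb1, hb1] at hx
      by_cases hxK : x ∈ K
      · simp [hxK] at hx
      · simp only [hxK, if_false] at hx
        rcases sub_ne_zero.mp (by simpa using hx) with h
        by_cases h1 : (σ n).1 x = 0
        · right; rw [Function.mem_support]; intro h2; rw [h1, h2] at hx; simp at hx
        · left; exact h1
    have hfs2 : FinSupp p.2 := by
      apply Set.Finite.subset ((hσ n).2.1.union (hσ m).2.1)
      intro e he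
      rw [Function.mem_support] at he
      rw [hp2 e, hb2, hb2] at he
      by_cases heK : e ∈ EK G K
      · simp [heK] at he
      · simp only [heK, if_false] at he
        by_cases h1 : (σ n).2 e = 0
        · right; rw [Function.mem_support]; intro h2; rw [h1, h2] at he; simp at he
        · left; exact h1
    have hbskew : ∀ k, Skew (b k).2 := by
      intro k e
      rw [hb2, hb2, hEKsymm e]
      by_cases he : e ∈ EK G K
      · simp [he]
      · simp only [he, if_false]
        exact (hσ k).2.2.1 e
    have hskew : Skew p.2 := by
      intro e
      rw [hp2, hp2, hbskew n e, hbskew m e]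
      ring
    have hsuppE : Function.support p.2 ⊆ G.E := by
      intro e he
      rw [Function.mem_support, hp2, hb2, hb2] at he
      by_contra heE
      have h1 : (σ n).2 e = 0 := by
        by_contra h; exact heE ((hσ n).2.2.2 h)
      have h2 : (σ m).2 e = 0 := by
        by_contra h; exact heE ((hσ m).2.2.2 h)
      rw [h1, h2] at he
      simp at he
    have hsuppK : Function.support p.1 ⊆ Kᶜ := by
      intro x hx
      rw [Function.mem_support, hp1, hb1, hb1] at hx
      intro hxK
      simp [hxK] at hx
    have hsuppEK : Function.support p.2 ⊆ (EK G K)ᶜ := by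
      intro e he
      rw [Function.mem_support, hp2, hb2, hb2] at he
      intro heK
      simp [heK] at he
    have := hineq p.1 p.2 hfs1 hfs2 hskew hsuppE hsuppK hsuppEK
    have hpj : j (p.1, p.2) = j (b n) - j (b m) := by
      have : (p.1, p.2) = b n - b m := rfl
      rw [this, map_sub]
    rw [hpj] at this
    calc C * ‖j (b n) - j (b m)‖ ≤ ‖D (j (b n) - j (b m))‖ := this
      _ = ‖D (j (b n)) - D (j (b m))‖ := by rw [map_sub]
  -- coordinate extraction
  set Φ : ((V → ℝ) × (V × V → ℝ)) →L[ℝ] ((K' → ℝ) × (E' → ℝ)) :=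
    (ContinuousLinearMap.pi fun x : K' =>
      (ContinuousLinearMap.proj (x : V)).comp
        (ContinuousLinearMap.fst ℝ (V → ℝ) (V × V → ℝ))).prod
    (ContinuousLinearMap.pi fun e : E' =>
      (ContinuousLinearMap.proj (e : V × V)).comp
        (ContinuousLinearMap.snd ℝ (V → ℝ) (V × V → ℝ))) with hΦdef
  have hΦ : ∀ q : ((V → ℝ) × (V × V → ℝ)),
      Φ q = (fun x : K' => q.1 x, fun e : E' => q.2 e) := fun q => rfl
  set T : W →L[ℝ] ((K' → ℝ) × (E' → ℝ)) := Φ.comp ι with hTdef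
  set u : ℕ → ((K' → ℝ) × (E' → ℝ)) := fun n => Φ (σ n) with hudef
  have huT : ∀ n, u n = T (j (σ n)) := by
    intro n
    rw [hudef, hTdef]
    simp only [ContinuousLinearMap.comp_apply]
    rw [hι _ (hσS n)]
  have hubd : ∀ n, u n ∈ Metric.closedBall (0 : (K' → ℝ) × (E' → ℝ)) (‖T‖ * M) := by
    intro n
    rw [Metric.mem_closedBall, dist_zero_right, huT n]
    calc ‖T (j (σ n))‖ ≤ ‖T‖ * ‖j (σ n)‖ := T.le_opNorm _
      _ ≤ ‖T‖ * M := by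
        apply mul_le_mul_of_nonneg_left (hM n) (norm_nonneg _)
  obtain ⟨L, _, ψ, hψ, hconv⟩ :=
    (isCompact_closedBall (0 : (K' → ℝ) × (E' → ℝ)) (‖T‖ * M)).tendsto_subseq hubd
  -- the reconstruction map Ψ
  set ex : V → ((V → ℝ) × (V × V → ℝ)) := fun x =>
    ((fun y => if y = x then (1 : ℝ) else 0), 0) with hexdef
  set ee : (V × V) → ((V → ℝ) × (V × V → ℝ)) := fun e =>
    (0, fun e' => if e' = e then (1 : ℝ) else 0) with heedef
  set Ψ : ((K' → ℝ) × (E' → ℝ)) →L[ℝ] W :=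
    (∑ x : K', (((ContinuousLinearMap.proj x).comp
        (ContinuousLinearMap.fst ℝ (K' → ℝ) (E' → ℝ))).smulRight (j (ex (x : V))))) +
    (∑ e : E', (((ContinuousLinearMap.proj e).comp
        (ContinuousLinearMap.snd ℝ (K' → ℝ) (E' → ℝ))).smulRight (j (ee (e : V × V))))) with hΨdef
  have hΨ : ∀ v : ((K' → ℝ) × (E' → ℝ)),
      Ψ v = (∑ x : K', v.1 x • j (ex (x : V))) + (∑ e : E', v.2 e • j (ee (e : V × V))) := by
    intro v
    rw [hΨdef]
    simp [ContinuousLinearMap.sum_apply]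
  -- a n in terms of u n
  have ha_sum : ∀ n, a n = (∑ x : K', (u n).1 x • ex (x : V)) +
      (∑ e : E', (u n).2 e • ee (e : V × V)) := by
    intro n
    have h1 : (a n).1 = (∑ x : K', (u n).1 x • ex (x : V)).1 +
        (∑ e : E', (u n).2 e • ee (e : V × V)).1 := by
      rw [Prod.fst_sum, Prod.fst_sum]
      funext z
      simp only [Pi.add_apply, Finset.sum_apply, Prod.smul_fst, Prod.smul_snd, Prod.smul_mk,
        Pi.smul_apply, smul_eq_mul, smul_zero, Pi.zero_apply, mul_zero, Finset.sum_const_zero,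
        add_zero, mul_ite, mul_one, hexdef, heedef]
      show (if z ∈ K then (σ n).1 z else 0) = ∑ c : K', if z = (c : V) then (u n).1 c else 0
      by_cases hz : z ∈ K
      · have hzK' : z ∈ K' := by simp [hK'def, hz]
        rw [if_pos hz]
        rw [Finset.sum_eq_single_of_mem (⟨z, hzK'⟩ : {x // x ∈ K'}) (Finset.mem_univ _)
          (fun c _ hc => by
            rw [if_neg]
            intro h; exact hc (Subtype.ext h.symm))]
        rw [if_pos rfl]
        rfl
      · rw [if_neg hz]
        symm
        apply Finset.sum_eq_zero
        intro c _
        rw [if_neg]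
        intro h
        apply hz
        have hc : (c : V) ∈ K := hK.mem_toFinset.mp c.2
        rwa [h]
    have h2 : (a n).2 = (∑ x : K', (u n).1 x • ex (x : V)).2 +
        (∑ e : E', (u n).2 e • ee (e : V × V)).2 := by
      rw [Prod.snd_sum, Prod.snd_sum]
      funext z
      simp only [Pi.add_apply, Finset.sum_apply, Prod.smul_fst, Prod.smul_snd, Prod.smul_mk,
        Pi.smul_apply, smul_eq_mul, smul_zero, Pi.zero_apply, mul_zero, Finset.sum_const_zero,
        zero_add, mul_ite, mul_one, hexdef, heedef]
      show (if z ∈ EK G K then (σ n).2 z else 0) =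
          ∑ c : E', if z = (c : V × V) then (u n).2 c else 0
      by_cases hz : z ∈ EK G K
      · have hzE' : z ∈ E' := by simp [hE'def, hz]
        rw [if_pos hz]
        rw [Finset.sum_eq_single_of_mem (⟨z, hzE'⟩ : {e // e ∈ E'}) (Finset.mem_univ _)
          (fun c _ hc => by
            rw [if_neg]
            intro h; exact hc (Subtype.ext h.symm))]
        rw [if_pos rfl]
        rfl
      · rw [if_neg hz]
        symm
        apply Finset.sum_eq_zero
        intro c _
        rw [if_neg]
        intro h
        apply hz
        have hc : (c : V × V) ∈ EK G K := hEKfin.mem_toFinset.mp c.2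
        rwa [h]
    exact Prod.ext h1 h2
  have hja : ∀ n, j (a n) = Ψ (u n) := by
    intro n
    rw [ha_sum n, map_add, map_sum, map_sum, hΨ]
    simp only [map_smul]
  -- convergence of the inner parts
  have hconva : Filter.Tendsto (fun n => j (a (ψ n))) Filter.atTop (nhds (Ψ L)) := by
    have : Filter.Tendsto (fun n => Ψ (u (ψ n))) Filter.atTop (nhds (Ψ L)) :=
      (Ψ.continuous.tendsto L).comp hconv
    simpa only [hja] using this
  -- convergence of D of the outer parts
  have hjb : ∀ k, j (b k) = j (σ k) - j (a k) := by
    intro k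
    rw [hbdef]
    exact map_sub j _ _
  have hyψ : Filter.Tendsto (fun n => D (j (σ (ψ n)))) Filter.atTop (nhds y) :=
    hy.comp hψ.tendsto_atTop
  have hDb : Filter.Tendsto (fun n => D (j (b (ψ n)))) Filter.atTop (nhds (y - D (Ψ L))) := by
    have h1 : Filter.Tendsto (fun n => D (j (a (ψ n)))) Filter.atTop (nhds (D (Ψ L))) :=
      (D.continuous.tendsto _).comp hconva
    have := hyψ.sub h1
    simpa only [hjb, map_sub] using this
  -- the outer parts are Cauchy in W
  have hbC : CauchySeq (fun n => j (b (ψ n))) := by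
    have hDbC : CauchySeq (fun n => D (j (b (ψ n)))) := hDb.cauchySeq
    rw [Metric.cauchySeq_iff] at hDbC ⊢
    intro ε hε
    obtain ⟨N, hN⟩ := hDbC (C * ε) (by positivity)
    refine ⟨N, fun m hm n hn => ?_⟩
    have h1 := key (ψ m) (ψ n)
    have h2 := hN m hm n hn
    rw [dist_eq_norm] at h2 ⊢
    exact lt_of_mul_lt_mul_left (lt_of_le_of_lt h1 h2) hC.le
  obtain ⟨w1, hw1⟩ := cauchySeq_tendsto_of_complete hbC
  refine ⟨ψ, hψ, Ψ L + w1, ?_⟩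
  have heq : (fun n => j (σ (ψ n))) = fun n => j (a (ψ n)) + j (b (ψ n)) := by
    funext n
    rw [hab (ψ n), map_add]
  rw [heq]
  exact hconva.add hw1
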